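/- For every instance in which each project valuation v_k is monotone XoS (with v_k(∅)=0), there exist an allocation S with SW(S) = OPT and a payment vector p̄ such that (S, p̄) is core stable. That is, a (1,1)-core stable solution exists: a fully budget-balanced, fully stable solution at a welfare-maximizing allocation. -/
import Mathlib


/-- For every instance with monotone XoS (fractionally subadditive) project valuations
there exists a `(1,1)`-core stable solution: a welfare-maximizing allocation `S`
together with payments `p̄` that are stable and fully budget-balanced. -/
theorem stmt9 {𝒩 P : Type*} [Fintype 𝒩] [DecidableEq 𝒩] [Fintype P] [Nonempty P]
    (v : P → Finset 𝒩 → ℝ)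
    (hzero : ∀ k, v k ∅ = 0)
    (hnonneg : ∀ k (T : Finset 𝒩), 0 ≤ v k T)
    (hmono : ∀ k (A B : Finset 𝒩), A ⊆ B → v k A ≤ v k B)
    -- each v k is XoS: a pointwise maximum of finitely many nonnegative additive clauses
    (hxos : ∀ k, ∃ (r : ℕ) (a : Fin (r + 1) → 𝒩 → ℝ),
      (∀ j i, 0 ≤ a j i) ∧
      (∀ T : Finset 𝒩,
        v k T = (Finset.univ : Finset (Fin (r + 1))).sup' Finset.univ_nonempty
          (fun j => ∑ i ∈ T, a j i))) :
    ∃ (S : P → Finset 𝒩) (pbar : 𝒩 → ℝ),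
      -- S is an allocation
      (∀ k l, k ≠ l → Disjoint (S k) (S l)) ∧
      Finset.univ.biUnion S = Finset.univ ∧
      -- S is welfare maximizing: SW(S) = OPT
      (∀ S' : P → Finset 𝒩,
        (∀ k l, k ≠ l → Disjoint (S' k) (S' l)) →
        Finset.univ.biUnion S' = Finset.univ →
        ∑ k, v k (S' k) ≤ ∑ k, v k (S k)) ∧
      -- p̄ is a payment vector
      (∀ i, 0 ≤ pbar i) ∧
      -- stability
      (∀ k (T : Finset 𝒩), v k (S k ∪ T) ≤ ∑ i ∈ S k ∪ T, pbar i) ∧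
      -- budget balance
      (∑ i, pbar i = ∑ k, v k (S k)) := by
  classical
  -- valid allocations
  set Valid : (P → Finset 𝒩) → Prop := fun S =>
    (∀ k l, k ≠ l → Disjoint (S k) (S l)) ∧ Finset.univ.biUnion S = Finset.univ
    with hValid
  obtain ⟨k0⟩ := ‹Nonempty P›
  have hS0 : Valid (fun k => if k = k0 then Finset.univ else ∅) := by
    constructor
    · intro k l hkl
      by_cases hk : k = k0 <;> by_cases hl : l = k0 <;>
        simp_all
    · ext i
      simp only [Finset.mem_biUnion, Finset.mem_univ, iff_true]
      exact ⟨k0, by simp⟩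
  -- a welfare-maximizing valid allocation
  obtain ⟨S, hSmem, hmax⟩ :=
    Finset.exists_max_image (Finset.univ.filter Valid) (fun S => ∑ k, v k (S k))
      ⟨_, Finset.mem_filter.mpr ⟨Finset.mem_univ _, hS0⟩⟩
  have hS : Valid S := (Finset.mem_filter.mp hSmem).2
  have hmax' : ∀ S', Valid S' → ∑ k, v k (S' k) ≤ ∑ k, v k (S k) := by
    intro S' hS'
    exact hmax S' (Finset.mem_filter.mpr ⟨Finset.mem_univ _, hS'⟩)
  obtain ⟨hdisj, hcov⟩ := hS
  -- choose, for each project, a clause supporting its assigned set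
  have hc : ∀ k, ∃ c : 𝒩 → ℝ, (∀ i, 0 ≤ c i) ∧ (∀ T : Finset 𝒩, ∑ i ∈ T, c i ≤ v k T) ∧
      (∑ i ∈ S k, c i = v k (S k)) := by
    intro k
    obtain ⟨r, a, ha, hv⟩ := hxos k
    obtain ⟨j, -, hj⟩ :=
      Finset.exists_mem_eq_sup' (Finset.univ_nonempty (α := Fin (r + 1)))
        (fun j => ∑ i ∈ S k, a j i)
    refine ⟨a j, ha j, fun T => ?_, ?_⟩
    · rw [hv T]
      exact Finset.le_sup' (fun j => ∑ i ∈ T, a j i) (Finset.mem_univ j)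
    · rw [hv (S k)]
      exact hj.symm
  choose c hc0 hcle hceq using hc
  -- the payments
  set pbar : 𝒩 → ℝ := fun i => ∑ k, if i ∈ S k then c k i else 0 with hpbardef
  have hpbar : ∀ k i, i ∈ S k → pbar i = c k i := by
    intro k i hi
    rw [hpbardef]
    refine Finset.sum_eq_single_of_mem k (Finset.mem_univ k) ?_ |>.trans (if_pos hi)
    intro l _ hlk
    have : i ∉ S l := Finset.disjoint_left.mp (hdisj k l hlk.symm) hi
    simp [this]
  have hpbar0 : ∀ i, 0 ≤ pbar i := by
    intro i
    apply Finset.sum_nonneg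
    intro l _
    split
    · exact hc0 l i
    · exact le_rfl
  have hsumS : ∀ k, ∑ i ∈ S k, pbar i = v k (S k) := by
    intro k
    rw [← hceq k]
    exact Finset.sum_congr rfl fun i hi => hpbar k i hi
  -- budget balance
  have hbudget : ∑ i, pbar i = ∑ k, v k (S k) := by
    simp only [hpbardef]
    rw [Finset.sum_comm]
    refine Finset.sum_congr rfl fun k _ => ?_
    rw [Finset.sum_ite_mem, Finset.univ_inter]
    exact hceq k
  refine ⟨S, pbar, hdisj, hcov, fun S' h1 h2 => hmax' S' ⟨h1, h2⟩, hpbar0, ?_, hbudget⟩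
  -- stability
  intro k T
  set S' : P → Finset 𝒩 := fun l => if l = k then S k ∪ T else S l \ T with hS'def
  have hS'valid : Valid S' := by
    constructor
    · intro l m hlm
      rcases eq_or_ne l k with hl | hl <;> rcases eq_or_ne m k with hm | hm
      · exact absurd (hl.trans hm.symm) hlm
      · simp only [hS'def, hl, if_pos rfl, if_neg hm]
        refine Finset.disjoint_union_left.mpr ⟨?_, ?_⟩
        · exact (hdisj k m (fun h => hm h.symm)).mono_right Finset.sdiff_subset
        · exact (Finset.sdiff_disjoint).symm
      · simp only [hS'def, hm, if_pos rfl, if_neg hl]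
        refine Finset.disjoint_union_right.mpr ⟨?_, ?_⟩
        · exact (hdisj l k hl).mono_left Finset.sdiff_subset
        · exact Finset.sdiff_disjoint
      · simp only [hS'def, if_neg hl, if_neg hm]
        exact (hdisj l m hlm).mono Finset.sdiff_subset Finset.sdiff_subset
    · ext i
      simp only [Finset.mem_biUnion, Finset.mem_univ, iff_true]
      have : i ∈ Finset.univ.biUnion S := by rw [hcov]; exact Finset.mem_univ i
      obtain ⟨l, -, hl⟩ := Finset.mem_biUnion.mp this
      by_cases hiT : i ∈ T
      · exact ⟨k, by simp [hS'def, hiT]⟩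
      · rcases eq_or_ne l k with rfl | hlk
        · exact ⟨l, by simp [hS'def, hl]⟩
        · exact ⟨l, by simp [hS'def, hlk, hl, hiT]⟩
  have hopt := hmax' S' hS'valid
  -- lower bound on the value of modified projects
  have hlow : ∀ l, l ≠ k → v l (S l) - ∑ i ∈ S l ∩ T, c l i ≤ v l (S' l) := by
    intro l hl
    have h1 : v l (S' l) = v l (S l \ T) := by rw [hS'def]; simp [hl]
    have h2 : ∑ i ∈ S l \ T, c l i ≤ v l (S l \ T) := hcle l _
    have h3 : ∑ i ∈ S l ∩ T, c l i + ∑ i ∈ S l \ T, c l i = ∑ i ∈ S l, c l i :=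
      Finset.sum_inter_add_sum_sdiff _ _ _
    rw [h1, ← hceq l]
    linarith
  -- split the sums at k
  have hsplit : ∀ f : P → ℝ, ∑ l, f l = f k + ∑ l ∈ Finset.univ.erase k, f l :=
    fun f => (Finset.add_sum_erase _ f (Finset.mem_univ k)).symm
  have hS'k : S' k = S k ∪ T := by rw [hS'def]; simp
  have key : v k (S k ∪ T) ≤ v k (S k) + ∑ l ∈ Finset.univ.erase k, ∑ i ∈ S l ∩ T, c l i := by
    have e1 : ∑ l, v l (S' l) = v k (S k ∪ T) + ∑ l ∈ Finset.univ.erase k, v l (S' l) := by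
      rw [hsplit (fun l => v l (S' l)), hS'k]
    have e2 : ∑ l, v l (S l) = v k (S k) + ∑ l ∈ Finset.univ.erase k, v l (S l) := by
      rw [hsplit (fun l => v l (S l))]
    have e3 : ∑ l ∈ Finset.univ.erase k, (v l (S l) - ∑ i ∈ S l ∩ T, c l i)
        ≤ ∑ l ∈ Finset.univ.erase k, v l (S' l) :=
      Finset.sum_le_sum fun l hl => hlow l (Finset.ne_of_mem_erase hl)
    rw [Finset.sum_sub_distrib] at e3
    rw [e1, e2] at hopt
    linarith
  -- the remaining term is bounded by the payments of `T \ S k`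
  have hrem : ∑ l ∈ Finset.univ.erase k, ∑ i ∈ S l ∩ T, c l i ≤ ∑ i ∈ T \ S k, pbar i := by
    have heq : ∀ l ∈ Finset.univ.erase k, ∑ i ∈ S l ∩ T, c l i = ∑ i ∈ S l ∩ T, pbar i := by
      intro l _
      exact Finset.sum_congr rfl fun i hi =>
        (hpbar l i (Finset.mem_inter.mp hi).1).symm
    rw [Finset.sum_congr rfl heq]
    rw [← Finset.sum_biUnion]
    · refine Finset.sum_le_sum_of_subset_of_nonneg ?_ (fun i _ _ => hpbar0 i)
      intro i hi
      obtain ⟨l, hl, hil⟩ := Finset.mem_biUnion.mp hi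
      have hlk := Finset.ne_of_mem_erase hl
      obtain ⟨hiS, hiT⟩ := Finset.mem_inter.mp hil
      refine Finset.mem_sdiff.mpr ⟨hiT, ?_⟩
      exact Finset.disjoint_left.mp (hdisj l k hlk) hiS
    · intro l hl m hm hlm
      exact ((hdisj l m hlm).mono (Finset.inter_subset_left) (Finset.inter_subset_left))
  have hTsum : ∑ i ∈ S k ∪ T, pbar i = ∑ i ∈ S k, pbar i + ∑ i ∈ T \ S k, pbar i := by
    rw [← Finset.sum_union Finset.disjoint_sdiff, Finset.union_sdiff_self_eq_union]
  rw [hTsum, hsumS k]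
  linarith
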